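/- If X₁, ..., X_{n+1} are exchangeable and almost surely pairwise distinct, then the rank of X_{n+1} among X₁, ..., X_{n+1} is uniformly distributed on {1, 2, ..., n+1}. -/

import Mathlib

open MeasureTheory

section Aux

variable {n : ℕ}

/-- The rank-count function. -/
noncomputable def rankF (n : ℕ) (j : Fin (n + 1)) (y : Fin (n + 1) → ℝ) : ℕ :=
  (Finset.univ.filter (fun i => y i < y j)).card

lemma rankF_meas (j : Fin (n + 1)) : Measurable (rankF n j) := by
  classical
  have : rankF n j = fun y => ∑ i : Fin (n + 1), if y i < y j then 1 else 0 := by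
    funext y; simp only [rankF]; rw [Finset.card_filter]
  rw [this]
  exact Finset.measurable_sum _ fun i _ =>
    Measurable.ite (measurableSet_lt (measurable_pi_apply i) (measurable_pi_apply j))
      measurable_const measurable_const

lemma rankF_lt_of_lt {y : Fin (n + 1) → ℝ} {j j' : Fin (n + 1)} (h : y j < y j') :
    rankF n j y < rankF n j' y := by
  classical
  apply Finset.card_lt_card
  rw [Finset.ssubset_iff_of_subset]
  · exact ⟨j, by simp [h], by simp⟩
  · intro i hi
    simp only [Finset.mem_filter, Finset.mem_univ, true_and] at hi ⊢
    exact hi.trans h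

lemma rankF_inj {y : Fin (n + 1) → ℝ} (hy : Function.Injective y) :
    Function.Injective (fun j => rankF n j y) := by
  intro j j' hEq
  by_contra hne
  have hne' : y j ≠ y j' := fun h => hne (hy h)
  rcases lt_or_gt_of_ne hne' with h | h
  · exact absurd hEq (Nat.ne_of_lt (rankF_lt_of_lt h))
  · exact absurd hEq.symm (Nat.ne_of_lt (rankF_lt_of_lt h))

lemma rankF_le (j : Fin (n + 1)) (y : Fin (n + 1) → ℝ) : rankF n j y ≤ n := by
  classical
  have hsub : Finset.univ.filter (fun i => y i < y j) ⊆ Finset.univ.erase j := by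
    intro i hi
    simp only [Finset.mem_filter, Finset.mem_univ, true_and] at hi
    simp only [Finset.mem_erase, Finset.mem_univ, and_true]
    rintro rfl; exact lt_irrefl _ hi
  calc rankF n j y ≤ (Finset.univ.erase j).card := Finset.card_le_card hsub
    _ = n := by simp

lemma rankF_surj {y : Fin (n + 1) → ℝ} (hy : Function.Injective y) {m : ℕ} (hm : m ≤ n) :
    ∃ j, rankF n j y = m := by
  classical
  set e : Fin (n + 1) → Fin (n + 1) := fun j => ⟨rankF n j y, Nat.lt_succ_of_le (rankF_le j y)⟩
    with he
  have hinj : Function.Injective e := by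
    intro a b hab
    exact rankF_inj hy (by simpa [he, Fin.ext_iff] using hab)
  have hsurj : Function.Surjective e := Finite.surjective_of_injective hinj
  obtain ⟨j, hj⟩ := hsurj ⟨m, Nat.lt_succ_of_le hm⟩
  exact ⟨j, by simpa [he, Fin.ext_iff] using hj⟩

end Aux

/-- If `X₁, …, X_{n+1}` are exchangeable and a.s. pairwise distinct, then the rank
of `X_{n+1}` among `X₁, …, X_{n+1}` (i.e. `1 + #{i ≤ n : X_i < X_{n+1}}`) is
uniformly distributed on `{1, …, n+1}`. -/
theorem rank_uniform_of_exchangeable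
    {Ω : Type*} [MeasurableSpace Ω] (μ : Measure Ω) [IsProbabilityMeasure μ]
    (n : ℕ)
    (X : Fin (n + 1) → Ω → ℝ) (hmeas : ∀ i, Measurable (X i))
    (hexch : ∀ σ : Equiv.Perm (Fin (n + 1)),
      μ.map (fun ω => fun i => X (σ i) ω) = μ.map (fun ω => fun i => X i ω))
    (hdistinct : ∀ᵐ ω ∂μ, Function.Injective fun i => X i ω) :
    ∀ k ∈ Finset.Icc 1 (n + 1),
      μ {ω | 1 + (Finset.univ.filter
            (fun i : Fin n => X i.castSucc ω < X (Fin.last n) ω)).card = k}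
        = (↑(n + 1) : ENNReal)⁻¹ := by
  classical
  intro k hk
  obtain ⟨hk1, hk2⟩ := Finset.mem_Icc.mp hk
  obtain ⟨m, rfl⟩ : ∃ m, k = m + 1 := ⟨k - 1, (Nat.succ_pred_eq_of_pos hk1).symm⟩
  have hm : m ≤ n := by omega
  set vec : Ω → Fin (n + 1) → ℝ := fun ω i => X i ω with hvec
  have hvecm : Measurable vec := measurable_pi_lambda _ hmeas
  set A : Fin (n + 1) → Set Ω := fun j => {ω | rankF n j (vec ω) = m} with hA
  have hAmeas : ∀ j, MeasurableSet (A j) := fun j =>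
    ((rankF_meas j).comp hvecm) (measurableSet_singleton m)
  -- all A j have equal measure
  have key : ∀ j, μ (A j) = μ (A (Fin.last n)) := by
    intro j
    set σ : Equiv.Perm (Fin (n + 1)) := Equiv.swap (Fin.last n) j with hσ
    have hσlast : σ (Fin.last n) = j := Equiv.swap_apply_left _ _
    have hmeasσ : Measurable (fun ω => fun i => X (σ i) ω) :=
      measurable_pi_lambda _ fun i => hmeas _
    have hSmeas : MeasurableSet {y : Fin (n + 1) → ℝ | rankF n (Fin.last n) y = m} :=
      (rankF_meas (Fin.last n)) (measurableSet_singleton m)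
    have hcard : ∀ y : Fin (n + 1) → ℝ,
        rankF n (Fin.last n) (fun i => y (σ i)) = rankF n j y := by
      intro y
      simp only [rankF, hσlast]
      apply Finset.card_bij (fun a _ => σ a)
      · intro a ha
        simp only [Finset.mem_filter, Finset.mem_univ, true_and] at ha ⊢
        exact ha
      · intro a _ b _ hab; exact σ.injective hab
      · intro b hb
        refine ⟨σ.symm b, ?_, by simp⟩
        simp only [Finset.mem_filter, Finset.mem_univ, true_and] at hb ⊢
        simpa using hb
    have h2 : μ (A (Fin.last n)) = μ.map vec {y | rankF n (Fin.last n) y = m} := by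
      rw [Measure.map_apply hvecm hSmeas]
      rfl
    have h3 : μ.map vec {y | rankF n (Fin.last n) y = m}
        = μ ((fun ω => fun i => X (σ i) ω) ⁻¹' {y | rankF n (Fin.last n) y = m}) := by
      rw [← hexch σ, Measure.map_apply hmeasσ hSmeas]
    have h4 : (fun ω => fun i => X (σ i) ω) ⁻¹' {y | rankF n (Fin.last n) y = m} = A j := by
      ext ω
      simp only [Set.mem_preimage, Set.mem_setOf_eq, hA]
      rw [show (fun i => X (σ i) ω) = (fun i => vec ω (σ i)) from rfl, hcard (vec ω)]
    rw [h2, h3, h4]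
  -- the good set of injectivity
  set G : Set Ω := {ω | Function.Injective fun i => X i ω} with hG
  have hGmeas : MeasurableSet G := by
    have : G = ⋂ i, ⋂ j, ⋂ _h : i ≠ j, {ω | X i ω = X j ω}ᶜ := by
      ext ω
      simp only [Set.mem_iInter, Set.mem_compl_iff, Set.mem_setOf_eq, hG]
      constructor
      · intro h i j hij hxy; exact hij (h hxy)
      · intro h a b hab
        by_contra hne
        exact h a b hne hab
    rw [this]
    exact MeasurableSet.iInter fun i => MeasurableSet.iInter fun j =>
      MeasurableSet.iInter fun _ => (measurableSet_eq_fun (hmeas i) (hmeas j)).compl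
  have hGc : μ Gᶜ = 0 := by
    simpa [hG, Set.compl_setOf] using (ae_iff.mp hdistinct)
  have hGone : μ G = 1 := by
    have := measure_add_measure_compl (μ := μ) hGmeas
    rw [hGc, add_zero] at this
    simpa using this
  -- the sets A j ∩ G partition G
  have hdisj : Pairwise (Function.onFun Disjoint fun j => A j ∩ G) := by
    intro j j' hjj'
    refine Set.disjoint_left.mpr ?_
    rintro ω ⟨hj, hGω⟩ ⟨hj', _⟩
    exact hjj' (rankF_inj hGω (hj.trans hj'.symm))
  have hcover : (⋃ j, A j ∩ G) = G := by
    ext ω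
    simp only [Set.mem_iUnion, Set.mem_inter_iff, Set.mem_setOf_eq, hA]
    constructor
    · rintro ⟨j, _, hGω⟩; exact hGω
    · intro hGω
      obtain ⟨j, hj⟩ := rankF_surj (y := vec ω) hGω hm
      exact ⟨j, hj, hGω⟩
  have hsum : ∑ j : Fin (n + 1), μ (A j ∩ G) = 1 := by
    rw [← tsum_fintype (L := SummationFilter.unconditional _), ← measure_iUnion hdisj (fun j => (hAmeas j).inter hGmeas),
      hcover, hGone]
  have hAG : ∀ j, μ (A j ∩ G) = μ (A j) := by
    intro j
    apply le_antisymm (measure_mono Set.inter_subset_left)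
    calc μ (A j) ≤ μ (A j ∩ G) + μ Gᶜ := by
          refine (measure_mono ?_).trans (measure_union_le _ _)
          intro ω hω
          by_cases hGω : ω ∈ G
          · exact Or.inl ⟨hω, hGω⟩
          · exact Or.inr hGω
      _ = μ (A j ∩ G) := by rw [hGc, add_zero]
  have hsum' : (↑(n + 1) : ENNReal) * μ (A (Fin.last n)) = 1 := by
    have : ∑ j : Fin (n + 1), μ (A j ∩ G) = ∑ j : Fin (n + 1), μ (A (Fin.last n)) := by
      refine Finset.sum_congr rfl fun j _ => ?_
      rw [hAG j, key j]
    rw [this, Finset.sum_const, Finset.card_univ, Fintype.card_fin, nsmul_eq_mul] at hsum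
    exact hsum
  have hne : (↑(n + 1) : ENNReal) ≠ 0 := by
    simp
  have hnt : (↑(n + 1) : ENNReal) ≠ ⊤ := by
    simp
  have hAval : μ (A (Fin.last n)) = (↑(n + 1) : ENNReal)⁻¹ := by
    calc μ (A (Fin.last n))
        = ((↑(n + 1) : ENNReal)⁻¹ * ↑(n + 1)) * μ (A (Fin.last n)) := by
          rw [ENNReal.inv_mul_cancel hne hnt, one_mul]
      _ = (↑(n + 1) : ENNReal)⁻¹ * (↑(n + 1) * μ (A (Fin.last n))) := by
          rw [mul_assoc]
      _ = (↑(n + 1) : ENNReal)⁻¹ := by rw [hsum', mul_one]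
  -- identify the target set with A (Fin.last n)
  have hcards : ∀ ω, (Finset.univ.filter
      (fun i : Fin n => X i.castSucc ω < X (Fin.last n) ω)).card
      = rankF n (Fin.last n) (vec ω) := by
    intro ω
    simp only [rankF, hvec, Finset.card_filter]
    rw [Fin.sum_univ_castSucc]
    simp
  have hset : {ω | 1 + (Finset.univ.filter
      (fun i : Fin n => X i.castSucc ω < X (Fin.last n) ω)).card = m + 1}
      = A (Fin.last n) := by
    ext ω
    simp only [Set.mem_setOf_eq, hA, hcards ω]
    omega
  rw [hset, hAval]
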